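/- Let J ≥ 2, Δx > 0, Δt > 0, 0 < γ < 1, χ ∈ ℝ, z ∈ ℝ. Let d : {0,…,J-1} → ℝ, D : {0,…,J} → ℝ, φ : {-1,…,J+1} → ℝ, and let c, C, u : {0,…,J} → ℝ denote the grid values c^n, c^{n+γ}, c^{n+1} respectively. Suppose: (i) for every interior index 1 ≤ j ≤ J-1, (u_j - C_j)/((1-γ)Δt) = ((1-γ)/(2-γ)) (C_j - c_j)/(γΔt) + (1/(2-γ)) F_j(u), where F_j(u) = [ d_j u_{j+1} - (d_j + d_{j-1}) u_j + d_{j-1} u_{j-1} ]/(Δx)² + χ z [ D_{j+1} u_{j+1}(φ_{j+2} - φ_j) - D_{j-1} u_{j-1}(φ_j - φ_{j-2}) ]/(4(Δx)²); (ii) at the left boundary, (u_0 - C_0)/((1-γ)Δt) = ((1-γ)/(2-γ)) (C_0 - c_0)/(γΔt) + (2/(2-γ)) d_0 (u_1 - u_0)/(Δx)² + (χ z/(2-γ)) [ D_0 u_0 (φ_1 - φ_{-1}) + D_1 u_1 (φ_2 - φ_0) ]/(2(Δx)²); (iii) at the right boundary, (u_J - C_J)/((1-γ)Δt) = ((1-γ)/(2-γ))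 (C_J - c_J)/(γΔt) - (2/(2-γ)) d_{J-1} (u_J - u_{J-1})/(Δx)² - (χ z/(2-γ)) [ D_{J-1} u_{J-1}(φ_J - φ_{J-2}) + D_J u_J (φ_{J+1} - φ_{J-1}) ]/(2(Δx)²). Write T(v) = Δx ( v_0/2 + Σ_{j=1}^{J-1} v_j + v_J/2 ) for the trapezoidal total. Then (T(u) - T(C))/((1-γ)Δt) = ((1-γ)/(2-γ)) (T(C) - T(c))/(γΔt). In particular, if T(C) = T(c) then T(u) = T(C). -/

import Mathlib

/-- Exact mass conservation of the BDF2 step of the mass-conservative TR-BDF2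
scheme for the 1D Nernst–Planck equation. Here `c`, `C`, `u` denote the grid
values cⁿ, c^{n+γ}, c^{n+1}, `d j` plays the role of D_{j+1/2}, `D` the grid
diffusion values, and `φ : ℤ → ℝ` the level-n potential including ghost values. -/
theorem bdf2_step_mass_conservation
    (J : ℕ) (hJ : 2 ≤ J) (Δx Δt γ χ z : ℝ)
    (hΔx : 0 < Δx) (hΔt : 0 < Δt) (hγ0 : 0 < γ) (hγ1 : γ < 1)
    (d D c C u : ℕ → ℝ) (φ : ℤ → ℝ)
    (hint : ∀ j, 1 ≤ j → j < J →
      (u j - C j) / ((1 - γ) * Δt)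
        = ((1 - γ) / (2 - γ)) * ((C j - c j) / (γ * Δt))
          + (1 / (2 - γ)) *
            ((d j * u (j + 1) - (d j + d (j - 1)) * u j + d (j - 1) * u (j - 1)) / Δx ^ 2
              + χ * z * (D (j + 1) * u (j + 1) * (φ ((j : ℤ) + 2) - φ (j : ℤ))
                  - D (j - 1) * u (j - 1) * (φ (j : ℤ) - φ ((j : ℤ) - 2))) / (4 * Δx ^ 2)))
    (hleft :
      (u 0 - C 0) / ((1 - γ) * Δt)
        = ((1 - γ) / (2 - γ)) * ((C 0 - c 0) / (γ * Δt))
          + (2 / (2 - γ)) * (d 0 * (u 1 - u 0) / Δx ^ 2)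
          + (χ * z / (2 - γ)) *
            ((D 0 * u 0 * (φ 1 - φ (-1)) + D 1 * u 1 * (φ 2 - φ 0)) / (2 * Δx ^ 2)))
    (hright :
      (u J - C J) / ((1 - γ) * Δt)
        = ((1 - γ) / (2 - γ)) * ((C J - c J) / (γ * Δt))
          - (2 / (2 - γ)) * (d (J - 1) * (u J - u (J - 1)) / Δx ^ 2)
          - (χ * z / (2 - γ)) *
            ((D (J - 1) * u (J - 1) * (φ (J : ℤ) - φ ((J : ℤ) - 2))
              + D J * u J * (φ ((J : ℤ) + 1) - φ ((J : ℤ) - 1))) / (2 * Δx ^ 2))) :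
    (Δx * (u 0 / 2 + ∑ j ∈ Finset.Ico 1 J, u j + u J / 2)
        - Δx * (C 0 / 2 + ∑ j ∈ Finset.Ico 1 J, C j + C J / 2)) / ((1 - γ) * Δt)
      = ((1 - γ) / (2 - γ)) *
        ((Δx * (C 0 / 2 + ∑ j ∈ Finset.Ico 1 J, C j + C J / 2)
          - Δx * (c 0 / 2 + ∑ j ∈ Finset.Ico 1 J, c j + c J / 2)) / (γ * Δt))
      ∧
      (Δx * (C 0 / 2 + ∑ j ∈ Finset.Ico 1 J, C j + C J / 2)
          = Δx * (c 0 / 2 + ∑ j ∈ Finset.Ico 1 J, c j + c J / 2)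
        → Δx * (u 0 / 2 + ∑ j ∈ Finset.Ico 1 J, u j + u J / 2)
          = Δx * (C 0 / 2 + ∑ j ∈ Finset.Ico 1 J, C j + C J / 2)) := by
  obtain ⟨m, rfl⟩ : ∃ m, J = m + 2 := ⟨J - 2, by omega⟩
  set pf : ℕ → ℝ := fun j => d j * (u (j + 1) - u j) with hpf
  set gf : ℕ → ℝ := fun j =>
    D j * u j * (φ ((j : ℤ) + 1) - φ ((j : ℤ) - 1))
      + D (j + 1) * u (j + 1) * (φ ((j : ℤ) + 2) - φ (j : ℤ)) with hgf
  have key : ∀ i ∈ Finset.range (m + 1),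
      (u (i + 1) - C (i + 1)) / ((1 - γ) * Δt)
        = ((1 - γ) / (2 - γ)) * ((C (i + 1) - c (i + 1)) / (γ * Δt))
          + (1 / (2 - γ)) * ((pf (i + 1) - pf i) / Δx ^ 2)
          + (1 / (2 - γ)) * (χ * z * (gf (i + 1) - gf i) / (4 * Δx ^ 2)) := by
    intro i hi
    rw [Finset.mem_range] at hi
    have h := hint (i + 1) (by omega) (by omega)
    simp only [Nat.add_sub_cancel] at h
    simp only [hpf, hgf]
    push_cast at h ⊢
    ring_nf at h ⊢
    linarith [h]
  have hsum : ∑ i ∈ Finset.range (m + 1), ((u (i + 1) - C (i + 1)) / ((1 - γ) * Δt))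
      = ∑ i ∈ Finset.range (m + 1),
            (((1 - γ) / (2 - γ)) * ((C (i + 1) - c (i + 1)) / (γ * Δt)))
        + (1 / (2 - γ)) * ((pf (m + 1) - pf 0) / Δx ^ 2)
        + (1 / (2 - γ)) * (χ * z * (gf (m + 1) - gf 0) / (4 * Δx ^ 2)) := by
    have hp : ∑ i ∈ Finset.range (m + 1), ((pf (i + 1) - pf i) / Δx ^ 2)
        = (pf (m + 1) - pf 0) / Δx ^ 2 := by
      rw [← Finset.sum_div, Finset.sum_range_sub]
    have hg : ∑ i ∈ Finset.range (m + 1), (χ * z * (gf (i + 1) - gf i) / (4 * Δx ^ 2))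
        = χ * z * (gf (m + 1) - gf 0) / (4 * Δx ^ 2) := by
      rw [← Finset.sum_div, ← Finset.mul_sum, Finset.sum_range_sub]
    rw [Finset.sum_congr rfl key, Finset.sum_add_distrib, Finset.sum_add_distrib,
      ← Finset.mul_sum, ← Finset.mul_sum, ← Finset.mul_sum, hp, hg]
  have l1 : ∑ i ∈ Finset.range (m + 1), ((u (i + 1) - C (i + 1)) / ((1 - γ) * Δt))
      = (∑ i ∈ Finset.range (m + 1), u (i + 1)
          - ∑ i ∈ Finset.range (m + 1), C (i + 1)) / ((1 - γ) * Δt) := by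
    rw [← Finset.sum_sub_distrib, Finset.sum_div]
  have l2 : ∑ i ∈ Finset.range (m + 1),
        (((1 - γ) / (2 - γ)) * ((C (i + 1) - c (i + 1)) / (γ * Δt)))
      = ((1 - γ) / (2 - γ)) * ((∑ i ∈ Finset.range (m + 1), C (i + 1)
          - ∑ i ∈ Finset.range (m + 1), c (i + 1)) / (γ * Δt)) := by
    rw [← Finset.sum_sub_distrib, Finset.sum_div, Finset.mul_sum]
  rw [l1, l2] at hsum
  have hIco : ∀ v : ℕ → ℝ, ∑ j ∈ Finset.Ico 1 (m + 2), v j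
      = ∑ i ∈ Finset.range (m + 1), v (i + 1) := by
    intro v
    rw [Finset.sum_Ico_eq_sum_range]
    exact Finset.sum_congr (by norm_num) fun i _ => by rw [Nat.add_comm]
  rw [hIco u, hIco C, hIco c]
  simp only [show m + 2 - 1 = m + 1 by omega] at hright
  simp only [hpf, hgf] at hsum
  push_cast at hsum hright
  rw [show m + 1 + 1 = m + 2 by omega] at hsum
  rw [show ((m : ℤ) + 1 + 1) = (m : ℤ) + 2 by ring, show ((m : ℤ) + 1 - 1) = (m : ℤ) by ring,
    show ((m : ℤ) + 1 + 2) = (m : ℤ) + 3 by ring] at hsum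
  rw [show ((m : ℤ) + 2 - 2) = (m : ℤ) by ring, show ((m : ℤ) + 2 + 1) = (m : ℤ) + 3 by ring,
    show ((m : ℤ) + 2 - 1) = (m : ℤ) + 1 by ring] at hright
  have h1 : (Δx * (u 0 / 2 + ∑ i ∈ Finset.range (m + 1), u (i + 1) + u (m + 2) / 2)
        - Δx * (C 0 / 2 + ∑ i ∈ Finset.range (m + 1), C (i + 1) + C (m + 2) / 2))
          / ((1 - γ) * Δt)
      = ((1 - γ) / (2 - γ)) *
        ((Δx * (C 0 / 2 + ∑ i ∈ Finset.range (m + 1), C (i + 1) + C (m + 2) / 2)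
          - Δx * (c 0 / 2 + ∑ i ∈ Finset.range (m + 1), c (i + 1) + c (m + 2) / 2))
            / (γ * Δt)) := by
    linear_combination Δx * hsum + (Δx / 2) * hleft + (Δx / 2) * hright
  refine ⟨h1, fun hTC => ?_⟩
  have ht1 : (1 - γ) * Δt ≠ 0 := ne_of_gt (mul_pos (by linarith) hΔt)
  have h2 : (Δx * (u 0 / 2 + ∑ i ∈ Finset.range (m + 1), u (i + 1) + u (m + 2) / 2)
        - Δx * (C 0 / 2 + ∑ i ∈ Finset.range (m + 1), C (i + 1) + C (m + 2) / 2))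
          / ((1 - γ) * Δt) = 0 := by
    rw [h1, hTC]; simp
  rw [div_eq_zero_iff] at h2
  rcases h2 with h2 | h2
  · linarith
  · exact absurd h2 ht1
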